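/- arXiv:1905.12734 — 4 statements merged into one kernel-verified Lean document; each statement's English description precedes it below -/
import Mathlib

section
/- Let J be a finite index set, let d : J → ℤ be constant increments, and let P : J → ℕ → Prop be a family of decidable, pairwise mutually exclusive guards (for all j ≠ j' and all x, not both P j x and P j' x hold). Let i0 : ℕ and let m : ℕ → ℤ be a sequence such that for every k, either there exists j ∈ J with P j (i0 + k) and m (k+1) = m k + d j, or no guard holds at i0 + k and m (k+1) = m k. Then for every n : ℕ, m n = m 0 + ∑_{j ∈ J} d j * (card of the set of x in the interval [i0, i0 + n) with P j x). -/
/-- Correctness of the `counter` summary rule for dependency-free loops: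
a counter incremented by a cycle-specific constant `d j` whenever guard `P j`
holds at the induction variable's current value (starting at `i0`, incremented
by 1 per iteration) satisfies the closed-form summary after `n` iterations. -/
theorem counter_rule_correct {J : Type*} [Fintype J]
    (d : J → ℤ) (P : J → ℕ → Prop) [∀ j x, Decidable (P j x)]
    (hexcl : ∀ j j', j ≠ j' → ∀ x, ¬(P j x ∧ P j' x))
    (i0 : ℕ) (m : ℕ → ℤ)
    (hstep : ∀ k : ℕ,
      (∃ j : J, P j (i0 + k) ∧ m (k + 1) = m k + d j) ∨
      ((∀ j : J, ¬ P j (i0 + k)) ∧ m (k + 1) = m k)) :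
    ∀ n : ℕ, m n = m 0 +
      ∑ j : J, d j * (((Finset.Ico i0 (i0 + n)).filter (fun x => P j x)).card : ℤ) := by
  intro n
  induction n with
  | zero => simp
  | succ n ih =>
    have hsplit : ∀ j : J,
        (((Finset.Ico i0 (i0 + (n+1))).filter (fun x => P j x)).card : ℤ) =
        (((Finset.Ico i0 (i0 + n)).filter (fun x => P j x)).card : ℤ) +
        (if P j (i0 + n) then 1 else 0) := by
      intro j
      have h : Finset.Ico i0 (i0 + (n+1)) = insert (i0 + n) (Finset.Ico i0 (i0 + n)) := by
        ext x; simp only [Finset.mem_Ico, Finset.mem_insert]; omega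
      rw [h, Finset.filter_insert]
      by_cases hp : P j (i0 + n)
      · rw [if_pos hp, if_pos hp, Finset.card_insert_of_notMem (by simp)]
        push_cast; ring
      · rw [if_neg hp, if_neg hp]; simp
    have hsum : ∑ j : J, d j * (((Finset.Ico i0 (i0 + (n+1))).filter (fun x => P j x)).card : ℤ)
        = (∑ j : J, d j * (((Finset.Ico i0 (i0 + n)).filter (fun x => P j x)).card : ℤ))
          + ∑ j : J, (if P j (i0 + n) then d j else 0) := by
      rw [← Finset.sum_add_distrib]
      refine Finset.sum_congr rfl fun j _ => ?_
      rw [hsplit j]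
      by_cases hp : P j (i0 + n) <;> simp [hp] <;> ring
    rcases hstep n with ⟨j0, hj0, hm⟩ | ⟨hno, hm⟩
    · have : ∑ j : J, (if P j (i0 + n) then d j else 0) = d j0 := by
        rw [Finset.sum_eq_single j0]
        · simp [hj0]
        · intro j _ hne
          rw [if_neg (fun hp => hexcl j j0 hne _ ⟨hp, hj0⟩)]
        · simp
      rw [hm, ih, hsum, this]; ring
    · have : ∑ j : J, (if P j (i0 + n) then d j else 0) = 0 := by
        refine Finset.sum_eq_zero fun j _ => if_neg (hno j)
      rw [hm, ih, hsum, this]; ring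
end

section
/- Let α be a type, J a finite index set, e : J → ℕ → α a family of update expressions depending only on the index, and P : J → ℕ → Prop a family of decidable, pairwise mutually exclusive guards. Let i0 : ℕ and let a : ℕ → (ℕ → α) be a sequence of arrays such that for every k, either there exists j ∈ J with P j (i0 + k) and a (k+1) = Function.update (a k) (i0 + k) (e j (i0 + k)), or no guard holds at i0 + k and a (k+1) = a k. Then for every n : ℕ, every j ∈ J, and every x in the interval [i0, i0 + n), if P j x holds then a n x = e j x. -/
/-- Correctness of the `write-array` summary rule: an i-indexed write array,
updated at the induction variable's index (starting at `i0`, stride 1) with a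
value `e j` depending only on the index, has value `e j x` at any index
`x ∈ [i0, i0 + n)` whose guard `P j` holds, after `n` iterations. -/
theorem write_array_rule_correct {α : Type*} {J : Type*} [Fintype J]
    (e : J → ℕ → α) (P : J → ℕ → Prop) [∀ j x, Decidable (P j x)]
    (hexcl : ∀ j j', j ≠ j' → ∀ x, ¬(P j x ∧ P j' x))
    (i0 : ℕ) (a : ℕ → ℕ → α)
    (hstep : ∀ k : ℕ,
      (∃ j : J, P j (i0 + k) ∧
        a (k + 1) = Function.update (a k) (i0 + k) (e j (i0 + k))) ∨
      ((∀ j : J, ¬ P j (i0 + k)) ∧ a (k + 1) = a k)) :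
    ∀ n : ℕ, ∀ j : J, ∀ x ∈ Finset.Ico i0 (i0 + n), P j x → a n x = e j x := by
  intro n
  induction n with
  | zero => intro j x hx; simp at hx
  | succ n ih =>
    intro j x hx hP
    simp only [Finset.mem_Ico] at hx ⊢
    obtain ⟨hx1, hx2⟩ := hx
    rcases lt_or_ge x (i0 + n) with h | h
    · -- x < i0 + n : value unchanged by step n
      have hval := ih j x (Finset.mem_Ico.mpr ⟨hx1, h⟩) hP
      rcases hstep n with ⟨j', _, heq⟩ | ⟨_, heq⟩
      · rw [heq, Function.update_of_ne (by omega)]; exact hval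
      · rw [heq]; exact hval
    · -- x = i0 + n
      have hxe : x = i0 + n := by omega
      subst hxe
      rcases hstep n with ⟨j', hPj', heq⟩ | ⟨hnone, _⟩
      · have : j' = j := by
          by_contra hne
          exact hexcl j' j hne (i0 + n) ⟨hPj', hP⟩
        subst this
        rw [heq, Function.update_self]
      · exact absurd hP (hnone j)
end

section
/- Let α be a type, J a finite index set, e : J → ℕ → α, and P : J → ℕ → Prop a family of decidable, pairwise mutually exclusive guards. Let i0 : ℕ and let a : ℕ → (ℕ → α) satisfy: for every k, either there exists j ∈ J with P j (i0 + k) and a (k+1) = Function.update (a k) (i0 + k) (e j (i0 + k)), or no guard holds at i0 + k and a (k+1) = a k. Then for every n : ℕ and every x : ℕ, a n x equals e j x if x lies in [i0, i0 + n) and P j x holds for some (necessarily unique) j ∈ J, and a n x equals a 0 x otherwise. -/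
/-- Full exactness of the `write-array` summary rule: after `n` iterations,
each cell `x` of an i-indexed write array equals `e j x` if `x ∈ [i0, i0 + n)`
and the (necessarily unique) guard `P j` holds at `x`, and equals its initial
value otherwise. -/
theorem write_array_rule_exact {α : Type*} {J : Type*} [Fintype J]
    (e : J → ℕ → α) (P : J → ℕ → Prop) [∀ j x, Decidable (P j x)]
    (hexcl : ∀ j j', j ≠ j' → ∀ x, ¬(P j x ∧ P j' x))
    (i0 : ℕ) (a : ℕ → ℕ → α)
    (hstep : ∀ k : ℕ,
      (∃ j : J, P j (i0 + k) ∧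
        a (k + 1) = Function.update (a k) (i0 + k) (e j (i0 + k))) ∨
      ((∀ j : J, ¬ P j (i0 + k)) ∧ a (k + 1) = a k)) :
    ∀ n : ℕ, ∀ x : ℕ,
      (∀ j : J, x ∈ Finset.Ico i0 (i0 + n) → P j x → a n x = e j x) ∧
      ((¬ ∃ j : J, x ∈ Finset.Ico i0 (i0 + n) ∧ P j x) → a n x = a 0 x) := by
  intro n
  induction n with
  | zero =>
    intro x
    constructor
    · intro j hx
      simp at hx
    · intro _; rfl
  | succ n ih =>
    intro x
    have ihx := ih x
    constructor
    · intro j hx hPx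
      simp only [Finset.mem_Ico] at hx
      rcases lt_or_ge x (i0 + n) with hlt | hge
      · -- x written before step n; show a (n+1) x = a n x
        have hne : x ≠ i0 + n := Nat.ne_of_lt hlt
        have hval : a n x = e j x :=
          ihx.1 j (Finset.mem_Ico.mpr ⟨hx.1, hlt⟩) hPx
        rcases hstep n with ⟨j', _, heq⟩ | ⟨_, heq⟩
        · rw [heq, Function.update_of_ne hne, hval]
        · rw [heq, hval]
      · -- x = i0 + n
        have hxeq : x = i0 + n := le_antisymm (by omega) hge
        rcases hstep n with ⟨j', hPj', heq⟩ | ⟨hno, _⟩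
        · have : j' = j := by
            by_contra hjj
            exact hexcl j' j hjj x ⟨hxeq ▸ hPj', hPx⟩
          subst this
          rw [heq, hxeq, Function.update_self]
        · exact absurd (hxeq ▸ hPx) (hno j)
    · intro hnone
      have hnone' : ¬ ∃ j : J, x ∈ Finset.Ico i0 (i0 + n) ∧ P j x := by
        intro ⟨j, hx, hP⟩
        exact hnone ⟨j, Finset.mem_Ico.mpr (by
          have := Finset.mem_Ico.mp hx; omega), hP⟩
      have h0 : a n x = a 0 x := ihx.2 hnone'
      rcases hstep n with ⟨j', hPj', heq⟩ | ⟨_, heq⟩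
      · have hne : i0 + n ≠ x := by
          intro h
          exact hnone ⟨j', Finset.mem_Ico.mpr (by omega), h ▸ hPj'⟩
        rw [heq, Function.update_of_ne (Ne.symm hne), h0]
      · rw [heq, h0]
end

section
/- Let α be a type, ι and κ index sets for counters and arrays, and J a finite index set of cycles with decidable, pairwise mutually exclusive guards P : J → ℕ → Prop. Let d : ι → J → ℤ and e : κ → J → ℕ → α. Let i0 : ℕ, and consider sequences m : ι → ℕ → ℤ and a : κ → ℕ → (ℕ → α) such that for every k: if there exists j ∈ J with P j (i0 + k), then for each counter c, m c (k+1) = m c k + d c j, and for each array b, a b (k+1) = Function.update (a b k) (i0 + k) (e b j (i0 + k)); if no guard holds at i0 + k, then m c (k+1) = m c k and a b (k+1) = a b k for all c, b. Then for every n : ℕ: (i) for each counter c, m c n = m c 0 + ∑_{j ∈ J} d c j * (card of {x ∈ [i0, i0+n) | P j x}); and (ii) for each array b and each x ∈ [i0, i0+n) with P j x, a b n x = e b j x, while a b n x = a b 0 x for x outside [i0, i0+n). -/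
/-- A summary is always inferable for a dependency-free loop: the joint
closed-form summary of all counters and all i-indexed write arrays after an
arbitrary number `n` of iterations is the conjunction of the `counter` rule
and the `write-array` rule (including the frame property for untouched cells). -/
theorem dependency_free_loop_summary {α : Type*} {ι κ J : Type*} [Fintype J]
    (P : J → ℕ → Prop) [∀ j x, Decidable (P j x)]
    (hexcl : ∀ j j', j ≠ j' → ∀ x, ¬(P j x ∧ P j' x))
    (d : ι → J → ℤ) (e : κ → J → ℕ → α)
    (i0 : ℕ) (m : ι → ℕ → ℤ) (a : κ → ℕ → ℕ → α)
    (hstep : ∀ k : ℕ,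
      (∃ j : J, P j (i0 + k) ∧
        (∀ c : ι, m c (k + 1) = m c k + d c j) ∧
        (∀ b : κ, a b (k + 1) = Function.update (a b k) (i0 + k) (e b j (i0 + k)))) ∨
      ((∀ j : J, ¬ P j (i0 + k)) ∧
        (∀ c : ι, m c (k + 1) = m c k) ∧
        (∀ b : κ, a b (k + 1) = a b k))) :
    ∀ n : ℕ,
      (∀ c : ι, m c n = m c 0 +
        ∑ j : J, d c j * (((Finset.Ico i0 (i0 + n)).filter (fun x => P j x)).card : ℤ)) ∧
      (∀ b : κ, ∀ j : J, ∀ x ∈ Finset.Ico i0 (i0 + n), P j x → a b n x = e b j x) ∧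
      (∀ b : κ, ∀ x : ℕ, x ∉ Finset.Ico i0 (i0 + n) → a b n x = a b 0 x) := by
  classical
  intro n
  induction n with
  | zero => simp
  | succ n ih =>
    obtain ⟨ihm, iha, ihf⟩ := ih
    have hsplit : Finset.Ico i0 (i0 + (n + 1)) =
        insert (i0 + n) (Finset.Ico i0 (i0 + n)) := by
      ext y; simp [Finset.mem_Ico, Finset.mem_insert]; omega
    have hnotmem : (i0 + n) ∉ Finset.Ico i0 (i0 + n) := by simp
    rcases hstep n with ⟨j0, hP0, hm, ha⟩ | ⟨hno, hm, ha⟩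
    · refine ⟨?_, ?_, ?_⟩
      · intro c
        rw [hm c, ihm c]
        have : ∀ j : J,
            (((Finset.Ico i0 (i0 + (n+1))).filter (fun x => P j x)).card : ℤ) =
            (((Finset.Ico i0 (i0 + n)).filter (fun x => P j x)).card : ℤ)
              + (if j = j0 then 1 else 0) := by
          intro j
          rw [hsplit, Finset.filter_insert]
          by_cases hj : j = j0
          · subst hj
            rw [if_pos hP0, Finset.card_insert_of_notMem (by simp), if_pos rfl]
            push_cast; ring
          · rw [if_neg (fun h => hexcl j j0 hj _ ⟨h, hP0⟩), if_neg hj]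
            simp
        simp only [this, mul_add]
        rw [Finset.sum_add_distrib]
        simp [Finset.sum_ite_eq' Finset.univ j0 (fun j => d c j)]
        ring
      · intro b j x hx hPx
        rw [hsplit] at hx
        rcases Finset.mem_insert.mp hx with rfl | hx
        · rw [ha b, Function.update_self]
          by_cases hj : j = j0
          · subst hj; rfl
          · exact absurd ⟨hPx, hP0⟩ (hexcl j j0 hj _)
        · rw [ha b, Function.update_of_ne (by rintro rfl; exact hnotmem hx)]
          exact iha b j x hx hPx
      · intro b x hx
        rw [hsplit, Finset.mem_insert] at hx
        push_neg at hx
        rw [ha b, Function.update_of_ne hx.1]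
        exact ihf b x hx.2
    · refine ⟨?_, ?_, ?_⟩
      · intro c
        rw [hm c, ihm c]
        congr 1
        apply Finset.sum_congr rfl
        intro j _
        congr 2
        rw [hsplit, Finset.filter_insert, if_neg (hno j)]
      · intro b j x hx hPx
        rw [hsplit, Finset.mem_insert] at hx
        rcases hx with rfl | hx
        · exact absurd hPx (hno j)
        · rw [ha b]; exact iha b j x hx hPx
      · intro b x hx
        rw [hsplit, Finset.mem_insert] at hx
        push_neg at hx
        rw [ha b]
        exact ihf b x hx.2
end
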